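/- For a tiled matrix of size p × q with p > q > 1, the critical path length of the TS-FT algorithm (FlatTree with TS kernels) equals 12p + 18q − 32. -/

import Mathlib

namespace TiledQR

/-- An elimination `elim(i, piv, k)`: tile `(i, k)` is zeroed out by an orthogonal
transformation combining row `i` with pivot row `piv`. -/
structure Elim where
  i : ℕ
  piv : ℕ
  k : ℕ
deriving DecidableEq

/-- `Before L e f` : the elimination `e` occurs strictly before `f` in the list `L`. -/
def Before (L : List Elim) (e f : Elim) : Prop :=
  ∃ a b : Fin L.length, (a : ℕ) < b ∧ L.get a = e ∧ L.get b = f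

/-- `L` is a valid elimination list for a `p × q` tiled matrix: it contains exactly one
elimination for every sub-diagonal tile `(i, k)` (`1 ≤ k ≤ min p q`, `k < i ≤ p`);
every elimination `elim(i, piv, k)` comes after all eliminations `elim(i, *, k')` and
`elim(piv, *, k')` with `k' < k`, and before the elimination `elim(piv, *, k)` of its
pivot row. -/
def ValidElimList (p q : ℕ) (L : List Elim) : Prop :=
  L.Nodup ∧
  (∀ e ∈ L, 1 ≤ e.k ∧ e.k ≤ min p q ∧ e.k < e.i ∧ e.i ≤ p ∧
      1 ≤ e.piv ∧ e.piv ≤ p ∧ e.piv ≠ e.i) ∧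
  (∀ i k, 1 ≤ k → k ≤ min p q → k < i → i ≤ p → ∃! piv, Elim.mk i piv k ∈ L) ∧
  (∀ a b : Fin L.length, (L.get b).k < (L.get a).k →
      ((L.get b).i = (L.get a).i ∨ (L.get b).i = (L.get a).piv) → (b : ℕ) < a) ∧
  (∀ a b : Fin L.length, (L.get b).k = (L.get a).k →
      (L.get b).i = (L.get a).piv → (a : ℕ) < b)

/-- The tasks of the tiled QR factorization with TT (triangle-on-top-of-triangle)
kernels. -/
inductive Task where
  | GEQRT (r k : ℕ)
  | UNMQR (r k j : ℕ)
  | TTQRT (i piv k : ℕ)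
  | TTMQR (i piv k j : ℕ)
deriving DecidableEq

/-- Weights of the TT kernels, the unit being `n_b ^ 3 / 3` flops. -/
def weight : Task → ℕ
  | .GEQRT _ _ => 4
  | .UNMQR _ _ _ => 6
  | .TTQRT _ _ _ => 2
  | .TTMQR _ _ _ _ => 6

/-- The tasks associated with a `p × q` tiled matrix and an elimination list `L`:
a factorization `GEQRT(r, k)` and updates `UNMQR(r, k, j)` (`k < j ≤ q`) for every tile
`(r, k)` with `k ≤ r ≤ p`, and, for every elimination `elim(i, piv, k)` of `L`, a task
`TTQRT(i, piv, k)` and updates `TTMQR(i, piv, k, j)` for `k < j ≤ q`. -/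
def InTasks (p q : ℕ) (L : List Elim) : Task → Prop
  | .GEQRT r k => 1 ≤ k ∧ k ≤ min p q ∧ k ≤ r ∧ r ≤ p
  | .UNMQR r k j => 1 ≤ k ∧ k ≤ min p q ∧ k ≤ r ∧ r ≤ p ∧ k < j ∧ j ≤ q
  | .TTQRT i piv k => Elim.mk i piv k ∈ L
  | .TTMQR i piv k j => Elim.mk i piv k ∈ L ∧ k < j ∧ j ≤ q

/-- The precedence (dependence) relation between the TT tasks.  Besides the flow
dependencies of the kernels, two tasks reading and writing a common tile
(a pivot tile reused by several eliminations of a column, or a pivot tile that is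
subsequently zeroed out) are serialized in the order of the elimination list. -/
inductive Prec (L : List Elim) : Task → Task → Prop
  | geqrt_unmqr (r k j : ℕ) :
      Prec L (.GEQRT r k) (.UNMQR r k j)
  | geqrt_ttqrt_row (i piv k : ℕ) :
      Prec L (.GEQRT i k) (.TTQRT i piv k)
  | geqrt_ttqrt_piv (i piv k : ℕ) :
      Prec L (.GEQRT piv k) (.TTQRT i piv k)
  | ttqrt_ttmqr (i piv k j : ℕ) :
      Prec L (.TTQRT i piv k) (.TTMQR i piv k j)
  | unmqr_ttmqr_row (i piv k j : ℕ) :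
      Prec L (.UNMQR i k j) (.TTMQR i piv k j)
  | unmqr_ttmqr_piv (i piv k j : ℕ) :
      Prec L (.UNMQR piv k j) (.TTMQR i piv k j)
  | ttmqr_geqrt (a b i k : ℕ) : 2 ≤ k → (a = i ∨ b = i) →
      Prec L (.TTMQR a b (k - 1) k) (.GEQRT i k)
  | ttqrt_serial (i i' piv k : ℕ) :
      Before L (Elim.mk i piv k) (Elim.mk i' piv k) →
      Prec L (.TTQRT i piv k) (.TTQRT i' piv k)
  | ttmqr_serial (i i' piv k j : ℕ) :
      Before L (Elim.mk i piv k) (Elim.mk i' piv k) →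
      Prec L (.TTMQR i piv k j) (.TTMQR i' piv k j)
  | ttqrt_pivot_use (a i piv k : ℕ) :
      Prec L (.TTQRT a i k) (.TTQRT i piv k)
  | ttmqr_pivot_use (a i piv k j : ℕ) :
      Prec L (.TTMQR a i k j) (.TTMQR i piv k j)

/-- A path in the weighted task DAG. -/
def IsPath (p q : ℕ) (L : List Elim) (path : List Task) : Prop :=
  (∀ t ∈ path, InTasks p q L t) ∧ path.Chain' (Prec L)

/-- The critical path length of the tiled algorithm given by the elimination list `L`:
the maximum total weight of a path in the weighted task DAG (equivalently, the makespan
of the earliest-start schedule with unboundedly many processors). -/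
noncomputable def cpLength (p q : ℕ) (L : List Elim) : ℕ :=
  sSup { w : ℕ | ∃ path : List Task, IsPath p q L path ∧ w = (path.map weight).sum }
/-- The tasks of the tiled QR factorization with TS (triangle-on-top-of-square)
kernels. -/
inductive TSTask where
  | GEQRT (r k : ℕ)
  | UNMQR (r k j : ℕ)
  | TSQRT (i piv k : ℕ)
  | TSMQR (i piv k j : ℕ)
deriving DecidableEq

/-- Weights of the TS kernels, the unit being `n_b ^ 3 / 3` flops. -/
def tsWeight : TSTask → ℕ
  | .GEQRT _ _ => 4
  | .UNMQR _ _ _ => 6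
  | .TSQRT _ _ _ => 6
  | .TSMQR _ _ _ _ => 12

/-- Row `r` is the pivot of some elimination of column `k`. -/
def IsPivot (L : List Elim) (r k : ℕ) : Prop := ∃ e ∈ L, e.k = k ∧ e.piv = r

/-- The TS tasks associated with a `p × q` tiled matrix and an elimination list `L`:
only the pivot tiles of each column (and the diagonal tile) are factored into
triangles; every elimination `elim(i, piv, k)` gives a task `TSQRT(i, piv, k)` and
updates `TSMQR(i, piv, k, j)` for `k < j ≤ q`. -/
def TSInTasks (p q : ℕ) (L : List Elim) : TSTask → Prop
  | .GEQRT r k => 1 ≤ k ∧ k ≤ min p q ∧ k ≤ r ∧ r ≤ p ∧ (r = k ∨ IsPivot L r k)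
  | .UNMQR r k j => 1 ≤ k ∧ k ≤ min p q ∧ k ≤ r ∧ r ≤ p ∧ (r = k ∨ IsPivot L r k) ∧
      k < j ∧ j ≤ q
  | .TSQRT i piv k => Elim.mk i piv k ∈ L
  | .TSMQR i piv k j => Elim.mk i piv k ∈ L ∧ k < j ∧ j ≤ q

/-- The precedence (dependence) relation between the TS tasks: flow dependencies of
the kernels; TSQRT (resp. TSMQR) tasks sharing the same pivot row (and column) are
serialized in list order; and every update of a tile from column `k - 1` precedes any
task of column `k` that factors, zeroes out, or uses that tile. -/
inductive TSPrec (L : List Elim) : TSTask → TSTask → Prop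
  | geqrt_unmqr (r k j : ℕ) :
      TSPrec L (.GEQRT r k) (.UNMQR r k j)
  | geqrt_tsqrt (i piv k : ℕ) :
      TSPrec L (.GEQRT piv k) (.TSQRT i piv k)
  | unmqr_tsmqr (i piv k j : ℕ) :
      TSPrec L (.UNMQR piv k j) (.TSMQR i piv k j)
  | tsqrt_tsmqr (i piv k j : ℕ) :
      TSPrec L (.TSQRT i piv k) (.TSMQR i piv k j)
  | tsqrt_serial (i i' piv k : ℕ) :
      Before L (Elim.mk i piv k) (Elim.mk i' piv k) →
      TSPrec L (.TSQRT i piv k) (.TSQRT i' piv k)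
  | tsmqr_serial (i i' piv k j : ℕ) :
      Before L (Elim.mk i piv k) (Elim.mk i' piv k) →
      TSPrec L (.TSMQR i piv k j) (.TSMQR i' piv k j)
  | tsqrt_pivot_use (a i piv k : ℕ) :
      TSPrec L (.TSQRT a i k) (.TSQRT i piv k)
  | tsmqr_pivot_use (a i piv k j : ℕ) :
      TSPrec L (.TSMQR a i k j) (.TSMQR i piv k j)
  | tsmqr_geqrt (a b r k : ℕ) : 2 ≤ k → (a = r ∨ b = r) →
      TSPrec L (.TSMQR a b (k - 1) k) (.GEQRT r k)
  | tsmqr_tsqrt (a b i piv k : ℕ) : 2 ≤ k → (a = i ∨ b = i ∨ a = piv ∨ b = piv) →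
      TSPrec L (.TSMQR a b (k - 1) k) (.TSQRT i piv k)
  | tsmqr_unmqr (a b r k j : ℕ) : 2 ≤ k → (a = r ∨ b = r) →
      TSPrec L (.TSMQR a b (k - 1) j) (.UNMQR r k j)
  | tsmqr_tsmqr (a b i piv k j : ℕ) : 2 ≤ k → (a = i ∨ b = i ∨ a = piv ∨ b = piv) →
      TSPrec L (.TSMQR a b (k - 1) j) (.TSMQR i piv k j)

/-- A path in the weighted TS task DAG. -/
def TSIsPath (p q : ℕ) (L : List Elim) (path : List TSTask) : Prop :=
  (∀ t ∈ path, TSInTasks p q L t) ∧ path.Chain' (TSPrec L)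

/-- The critical path length of a tiled algorithm executed with TS kernels. -/
noncomputable def tsCpLength (p q : ℕ) (L : List Elim) : ℕ :=
  sSup { w : ℕ | ∃ path : List TSTask, TSIsPath p q L path ∧
      w = (path.map tsWeight).sum }
/-- The FlatTree (Sameh-Kuck) elimination list: all eliminations of column `k` use the
diagonal row `k` as pivot; eliminations are listed column by column and, within a
column, by increasing row index. -/
def flatTreeList (p q : ℕ) : List Elim :=
  (List.range' 1 (min p q)).flatMap fun k =>
    (List.range' (k + 1) (p - k)).map fun i => Elim.mk i k k
/-! ### Auxiliary material for the proof -/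

/-- Strict order on eliminations matching the FlatTree list order. -/
def ltE (e f : Elim) : Prop := e.k < f.k ∨ (e.k = f.k ∧ e.i < f.i)

lemma mem_flatTree {p q : ℕ} {e : Elim} :
    e ∈ flatTreeList p q ↔
      e.piv = e.k ∧ 1 ≤ e.k ∧ e.k ≤ min p q ∧ e.k < e.i ∧ e.i ≤ p := by
  obtain ⟨i, piv, k⟩ := e
  simp only [flatTreeList, List.mem_flatMap, List.mem_map, List.mem_range']
  constructor
  · rintro ⟨k', ⟨a, ha, hk'⟩, i', ⟨b, hb, hi'⟩, he⟩
    cases he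
    refine ⟨rfl, ?_, ?_, ?_, ?_⟩ <;> omega
  · rintro ⟨hpiv, h1, h2, h3, h4⟩
    exact ⟨k, ⟨k - 1, by omega, by omega⟩, i, ⟨i - k - 1, by omega, by omega⟩,
      by rw [hpiv]⟩

lemma mk_mem_flatTree {p q i piv k : ℕ} :
    Elim.mk i piv k ∈ flatTreeList p q ↔
      piv = k ∧ 1 ≤ k ∧ k ≤ min p q ∧ k < i ∧ i ≤ p := mem_flatTree

lemma pairwise_flatTree (p q : ℕ) : List.Pairwise ltE (flatTreeList p q) := by
  rw [flatTreeList, List.pairwise_flatMap]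
  constructor
  · intro k _
    rw [List.pairwise_map]
    exact (List.pairwise_lt_range').imp fun h => Or.inr ⟨rfl, h⟩
  · refine (List.pairwise_lt_range').imp ?_
    intro a b hab x hx y hy
    simp only [List.mem_map, List.mem_range'] at hx hy
    obtain ⟨i, _, rfl⟩ := hx
    obtain ⟨j, _, rfl⟩ := hy
    exact Or.inl hab

lemma before_flatTree {p q : ℕ} {e f : Elim}
    (h : Before (flatTreeList p q) e f) : ltE e f := by
  obtain ⟨a, b, hab, ha, hb⟩ := h
  have := List.pairwise_iff_get.mp (pairwise_flatTree p q) a b hab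
  rwa [ha, hb] at this

lemma before_of_mem {p q : ℕ} {e f : Elim} (he : e ∈ flatTreeList p q)
    (hf : f ∈ flatTreeList p q) (hlt : ltE e f) : Before (flatTreeList p q) e f := by
  obtain ⟨a, ha⟩ := List.mem_iff_get.mp he
  obtain ⟨b, hb⟩ := List.mem_iff_get.mp hf
  refine ⟨a, b, ?_, ha, hb⟩
  rcases lt_trichotomy (a : ℕ) (b : ℕ) with h | h | h
  · exact h
  · exfalso
    have : a = b := Fin.ext h
    subst this; rw [ha] at hb; subst hb
    rcases hlt with h' | ⟨_, h'⟩ <;> omega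
  · exfalso
    have := List.pairwise_iff_get.mp (pairwise_flatTree p q) b a h
    rw [ha, hb] at this
    rcases hlt with h1 | ⟨h1, h1'⟩ <;> rcases this with h2 | ⟨h2, h2'⟩ <;> omega

lemma isPivot_flatTree {p q r k : ℕ} (h : IsPivot (flatTreeList p q) r k) : r = k := by
  obtain ⟨e, he, hk, hpiv⟩ := h
  have := mem_flatTree.mp he
  omega

/-- Earliest finish time of each task in the ASAP schedule of TS-FlatTree. -/
def F : TSTask → ℕ
  | .GEQRT _ k => if k ≤ 1 then 4 else 30 * k - 34
  | .UNMQR _ k _ => if k ≤ 1 then 10 else 30 * k - 28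
  | .TSQRT i _ k => if k ≤ 1 then 6 * i - 2 else 12 * i + 18 * k - 32
  | .TSMQR i _ k _ => if k ≤ 1 then 12 * i - 2 else 12 * i + 18 * k - 20
lemma weight_le_F {p q : ℕ} {t : TSTask}
    (ht : TSInTasks p q (flatTreeList p q) t) : tsWeight t ≤ F t := by
  cases t with
  | GEQRT r k => simp only [TSInTasks] at ht; simp only [tsWeight, F]; split <;> omega
  | UNMQR r k j => simp only [TSInTasks] at ht; simp only [tsWeight, F]; split <;> omega
  | TSQRT i piv k =>
      simp only [TSInTasks] at ht
      have h := mk_mem_flatTree.mp ht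
      simp only [tsWeight, F]; split <;> omega
  | TSMQR i piv k j =>
      simp only [TSInTasks] at ht
      have h := mk_mem_flatTree.mp ht.1
      simp only [tsWeight, F]; split <;> omega

lemma F_le_bound {p q : ℕ} (hq : 1 < q) (hpq : q < p) {t : TSTask}
    (ht : TSInTasks p q (flatTreeList p q) t) : F t ≤ 12 * p + 18 * q - 32 := by
  have hmin : min p q = q := min_eq_right hpq.le
  cases t with
  | GEQRT r k =>
      simp only [TSInTasks, hmin] at ht
      simp only [F]; split <;> omega
  | UNMQR r k j =>
      simp only [TSInTasks, hmin] at ht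
      simp only [F]; split <;> omega
  | TSQRT i piv k =>
      simp only [TSInTasks] at ht
      have h := mk_mem_flatTree.mp ht
      rw [hmin] at h
      simp only [F]; split <;> omega
  | TSMQR i piv k j =>
      simp only [TSInTasks] at ht
      have h := mk_mem_flatTree.mp ht.1
      rw [hmin] at h
      have hj := ht.2
      simp only [F]; split <;> omega

lemma edge_le {p q : ℕ} (hq : 1 < q) (hpq : q < p) {a b : TSTask}
    (hab : TSPrec (flatTreeList p q) a b)
    (ha : TSInTasks p q (flatTreeList p q) a)
    (hb : TSInTasks p q (flatTreeList p q) b) :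
    F a + tsWeight b ≤ F b := by
  have hmin : min p q = q := min_eq_right hpq.le
  cases hab with
  | geqrt_unmqr r k j =>
      simp only [TSInTasks, hmin] at ha hb
      simp only [F, tsWeight]; split <;> omega
  | geqrt_tsqrt i piv k =>
      simp only [TSInTasks, hmin] at ha hb
      have h := mk_mem_flatTree.mp hb
      rw [hmin] at h
      simp only [F, tsWeight]; split <;> (try split) <;> omega
  | unmqr_tsmqr i piv k j =>
      simp only [TSInTasks, hmin] at ha hb
      have h := mk_mem_flatTree.mp hb.1
      rw [hmin] at h
      simp only [F, tsWeight]; split <;> (try split) <;> omega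
  | tsqrt_tsmqr i piv k j =>
      simp only [TSInTasks] at ha hb
      have h := mk_mem_flatTree.mp ha
      simp only [F, tsWeight]; split <;> omega
  | tsqrt_serial i i' piv k hbef =>
      simp only [TSInTasks] at ha hb
      have h1 := mk_mem_flatTree.mp ha
      have h2 := mk_mem_flatTree.mp hb
      have hlt := before_flatTree hbef
      simp only [ltE] at hlt
      simp only [F, tsWeight]; split <;> omega
  | tsmqr_serial i i' piv k j hbef =>
      simp only [TSInTasks] at ha hb
      have h1 := mk_mem_flatTree.mp ha.1
      have h2 := mk_mem_flatTree.mp hb.1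
      have hlt := before_flatTree hbef
      simp only [ltE] at hlt
      simp only [F, tsWeight]; split <;> omega
  | tsqrt_pivot_use a i piv k =>
      simp only [TSInTasks] at ha hb
      have h1 := mk_mem_flatTree.mp ha
      have h2 := mk_mem_flatTree.mp hb
      omega
  | tsmqr_pivot_use a i piv k j =>
      simp only [TSInTasks] at ha hb
      have h1 := mk_mem_flatTree.mp ha.1
      have h2 := mk_mem_flatTree.mp hb.1
      omega
  | tsmqr_geqrt a b' r k h2 hor =>
      simp only [TSInTasks, hmin] at ha hb
      have h1 := mk_mem_flatTree.mp ha.1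
      have hr : r = k := by
        rcases hb.2.2.2.2 with h | h
        · exact h
        · exact isPivot_flatTree h
      simp only [F, tsWeight]; split <;> (try split) <;> omega
  | tsmqr_tsqrt a b' i piv k h2 hor =>
      simp only [TSInTasks] at ha hb
      have h1 := mk_mem_flatTree.mp ha.1
      have h3 := mk_mem_flatTree.mp hb
      simp only [F, tsWeight]; split <;> (try split) <;> omega
  | tsmqr_unmqr a b' r k j h2 hor =>
      simp only [TSInTasks, hmin] at ha hb
      have h1 := mk_mem_flatTree.mp ha.1
      have hr : r = k := by
        rcases hb.2.2.2.2.1 with h | h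
        · exact h
        · exact isPivot_flatTree h
      simp only [F, tsWeight]; split <;> (try split) <;> omega
  | tsmqr_tsmqr a b' i piv k j h2 hor =>
      simp only [TSInTasks] at ha hb
      have h1 := mk_mem_flatTree.mp ha.1
      have h3 := mk_mem_flatTree.mp hb.1
      have hj := hb.2
      simp only [F, tsWeight]; split <;> (try split) <;> omega
lemma chain_sum_le {p q : ℕ} (hq : 1 < q) (hpq : q < p) :
    ∀ (path : List TSTask) (t : TSTask),
      (∀ s ∈ t :: path, TSInTasks p q (flatTreeList p q) s) →
      List.Chain' (TSPrec (flatTreeList p q)) (t :: path) →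
      F t + (path.map tsWeight).sum ≤ 12 * p + 18 * q - 32
  | [], t, hmem, _ => by
      simpa using F_le_bound hq hpq (hmem t (by simp))
  | u :: rest, t, hmem, hchain => by
      have hedge : TSPrec (flatTreeList p q) t u := (List.isChain_cons_cons.mp hchain).1
      have ih := chain_sum_le hq hpq rest u
        (fun s hs => hmem s (List.mem_cons_of_mem _ hs))
        (List.isChain_cons_cons.mp hchain).2
      have h1 : F t + tsWeight u ≤ F u :=
        edge_le hq hpq hedge (hmem t (by simp)) (hmem u (by simp))
      simp only [List.map_cons, List.sum_cons]
      omega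

lemma path_sum_le {p q : ℕ} (hq : 1 < q) (hpq : q < p) (path : List TSTask)
    (h : TSIsPath p q (flatTreeList p q) path) :
    (path.map tsWeight).sum ≤ 12 * p + 18 * q - 32 := by
  obtain ⟨hmem, hchain⟩ := h
  cases path with
  | nil => simp
  | cons t rest =>
      have h1 := chain_sum_le hq hpq rest t hmem hchain
      have h2 : tsWeight t ≤ F t := weight_le_F (hmem t (by simp))
      simp only [List.map_cons, List.sum_cons]
      omega
/-- The critical path of TS-FlatTree for `p > q > 1`. -/
def cpPath (p q : ℕ) : List TSTask :=
  .GEQRT 1 1 :: .UNMQR 1 1 2 ::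
    (((List.range' 2 (p - 1)).map fun i => .TSMQR i 1 1 2) ++
      ((List.range' 2 (q - 2)).flatMap fun k => [.TSQRT p k k, .TSMQR p k k (k + 1)]) ++
      [.TSQRT p q q])

lemma memM {p q a : ℕ} (hq : 1 < q) (hpq : q < p) (h2 : 2 ≤ a) (hp : a ≤ p) :
    Elim.mk a 1 1 ∈ flatTreeList p q := by
  rw [mk_mem_flatTree]
  omega

lemma stepM {p q a : ℕ} (hq : 1 < q) (hpq : q < p) (h2 : 2 ≤ a) (hp : a + 1 ≤ p) :
    TSPrec (flatTreeList p q) (.TSMQR a 1 1 2) (.TSMQR (a + 1) 1 1 2) :=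
  TSPrec.tsmqr_serial a (a + 1) 1 1 2
    (before_of_mem (memM hq hpq h2 (by omega)) (memM hq hpq (by omega) hp)
      (Or.inr ⟨rfl, Nat.lt_succ_self a⟩))

lemma chainA {p q : ℕ} (hq : 1 < q) (hpq : q < p) :
    ∀ (n a : ℕ), 2 ≤ a → a + n ≤ p + 1 →
      List.Chain' (TSPrec (flatTreeList p q))
        ((List.range' a n).map fun i => TSTask.TSMQR i 1 1 2)
  | 0, a, _, _ => List.isChain_nil
  | 1, a, _, _ => List.isChain_singleton _
  | (n + 2), a, ha, hn => by
      rw [List.range'_succ, List.map_cons]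
      refine List.isChain_cons_cons.mpr ⟨?_, ?_⟩
      · exact stepM hq hpq ha (by omega)
      · exact chainA hq hpq (n + 1) (a + 1) (by omega) (by omega)

lemma chainB {p q : ℕ} :
    ∀ (n a : ℕ), 1 ≤ a →
      List.Chain' (TSPrec (flatTreeList p q))
        ((List.range' a n).flatMap fun k => [TSTask.TSQRT p k k, .TSMQR p k k (k + 1)])
  | 0, a, _ => List.isChain_nil
  | (n + 1), a, ha => by
      rw [List.range'_succ, List.flatMap_cons]
      have hSM : TSPrec (flatTreeList p q) (.TSQRT p a a) (.TSMQR p a a (a + 1)) :=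
        TSPrec.tsqrt_tsmqr p a a (a + 1)
      cases n with
      | zero => exact List.isChain_pair.mpr hSM
      | succ m =>
          rw [List.range'_succ, List.flatMap_cons]
          refine List.isChain_cons_cons.mpr ⟨hSM, List.isChain_cons_cons.mpr ⟨?_, ?_⟩⟩
          · exact TSPrec.tsmqr_tsqrt p a p (a + 1) (a + 1) (by omega) (Or.inl rfl)
          · have := chainB (p := p) (q := q) (m + 1) (a + 1) (by omega)
            rwa [List.range'_succ, List.flatMap_cons] at this

lemma headA {α : Type*} (f : ℕ → α) (n a : ℕ) :
    (((List.range' a (n + 1)).map f)).head? = some (f a) := by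
  rw [List.range'_succ, List.map_cons, List.head?_cons]

lemma lastA {α : Type*} (f : ℕ → α) (n a : ℕ) :
    (((List.range' a (n + 1)).map f)).getLast? = some (f (a + n)) := by
  rw [List.range'_concat, List.map_append, List.map_singleton, List.getLast?_concat,
    one_mul]

lemma headB {p : ℕ} (n a : ℕ) :
    (((List.range' a (n + 1)).flatMap
        fun k => [TSTask.TSQRT p k k, .TSMQR p k k (k + 1)])).head? =
      some (.TSQRT p a a) := by
  rw [List.range'_succ, List.flatMap_cons]
  rfl

lemma lastB {p : ℕ} (n a : ℕ) :
    (((List.range' a (n + 1)).flatMap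
        fun k => [TSTask.TSQRT p k k, .TSMQR p k k (k + 1)])).getLast? =
      some (.TSMQR p (a + n) (a + n) (a + n + 1)) := by
  rw [List.range'_concat, List.flatMap_append]
  show (_ ++ ([_, _] ++ [])).getLast? = _
  rw [List.append_nil]
  show (_ ++ ([_] ++ [_])).getLast? = _
  rw [← List.append_assoc, List.getLast?_concat, one_mul]

lemma sumA (n : ℕ) : ∀ a : ℕ,
    ((((List.range' a n).map fun i => TSTask.TSMQR i 1 1 2)).map tsWeight).sum = 12 * n := by
  induction n with
  | zero => simp
  | succ m ih =>
      intro a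
      rw [List.range'_succ, List.map_cons, List.map_cons, List.sum_cons, ih]
      simp [tsWeight]; ring

lemma sumB (p : ℕ) (n : ℕ) : ∀ a : ℕ,
    ((((List.range' a n).flatMap
        fun k => [TSTask.TSQRT p k k, .TSMQR p k k (k + 1)])).map tsWeight).sum = 18 * n := by
  induction n with
  | zero => simp
  | succ m ih =>
      intro a
      rw [List.range'_succ, List.flatMap_cons, List.map_append, List.sum_append, ih]
      simp [tsWeight]; ring
lemma some_or' {α : Type*} (a : α) (o : Option α) : (some a).or o = some a := rfl

lemma cpPath_mem {p q : ℕ} (hq : 1 < q) (hpq : q < p) :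
    ∀ t ∈ cpPath p q, TSInTasks p q (flatTreeList p q) t := by
  intro t ht
  have hmin : min p q = q := min_eq_right hpq.le
  simp only [cpPath, List.mem_cons, List.mem_append, List.mem_map, List.mem_flatMap,
    List.mem_range', List.not_mem_nil, or_false] at ht
  rcases ht with rfl | rfl | ((⟨i, ⟨c, hc, rfl⟩, rfl⟩ | ⟨k, ⟨c, hc, rfl⟩, hk⟩) | rfl)
  · exact ⟨le_refl 1, by omega, le_refl 1, by omega, Or.inl rfl⟩
  · exact ⟨le_refl 1, by omega, le_refl 1, by omega, Or.inl rfl, by omega, hq⟩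
  · exact ⟨memM hq hpq (by omega) (by omega), by omega, hq⟩
  · rcases hk with rfl | rfl
    · show Elim.mk p _ _ ∈ _
      rw [mk_mem_flatTree]; omega
    · refine ⟨?_, by omega, by omega⟩
      show Elim.mk p _ _ ∈ _
      rw [mk_mem_flatTree]; omega
  · show Elim.mk p q q ∈ _
    rw [mk_mem_flatTree]; omega

lemma cpPath_chain {p q : ℕ} (hq : 1 < q) (hpq : q < p) :
    List.Chain' (TSPrec (flatTreeList p q)) (cpPath p q) := by
  obtain ⟨m, rfl⟩ : ∃ m, p = m + 3 := ⟨p - 3, by omega⟩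
  obtain ⟨n, rfl⟩ : ∃ n, q = n + 2 := ⟨q - 2, by omega⟩
  rw [cpPath]
  have hA := chainA hq hpq (m + 3 - 1) 2 (by omega) (by omega)
  have hB := chainB (p := m + 3) (q := n + 2) (n + 2 - 2) 2 (by omega)
  refine List.isChain_cons_cons.mpr ⟨TSPrec.geqrt_unmqr 1 1 2, ?_⟩
  refine List.isChain_cons.mpr ⟨?_, ?_⟩
  · intro y hy
    rw [List.head?_append, List.head?_append] at hy
    have : (m + 3 : ℕ) - 1 = (m + 1) + 1 := rfl
    rw [this, headA] at hy
    simp only [some_or', Option.mem_def, Option.some_inj] at hy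
    subst hy
    exact TSPrec.unmqr_tsmqr 2 1 1 2
  · refine List.isChain_append.mpr ⟨List.isChain_append.mpr ⟨hA, hB, ?_⟩, by simp, ?_⟩
    · intro x hx y hy
      have h1 : (m + 3 : ℕ) - 1 = (m + 1) + 1 := rfl
      rw [h1, lastA] at hx
      simp only [Option.mem_def, Option.some_inj] at hx
      subst hx
      cases n with
      | zero => simp at hy
      | succ n' =>
          have h2 : (n' + 1 + 2 : ℕ) - 2 = n' + 1 := rfl
          rw [h2, headB] at hy
          simp only [Option.mem_def, Option.some_inj] at hy
          subst hy
          have h3 : (2 : ℕ) + (m + 1) = m + 3 := by omega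
          rw [h3]
          exact TSPrec.tsmqr_tsqrt (m + 3) 1 (m + 3) 2 2 (by omega) (Or.inl rfl)
    · intro x hx y hy
      simp only [List.head?_cons, Option.mem_def, Option.some_inj] at hy
      subst hy
      rw [List.getLast?_append] at hx
      cases n with
      | zero =>
          simp only [Nat.sub_self, List.range'_zero, List.flatMap_nil, List.getLast?_nil,
            Option.none_or] at hx
          have h1 : (m + 3 : ℕ) - 1 = (m + 1) + 1 := rfl
          rw [h1, lastA] at hx
          simp only [Option.mem_def, Option.some_inj] at hx
          subst hx
          have h3 : (2 : ℕ) + (m + 1) = m + 3 := by omega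
          rw [h3]
          exact TSPrec.tsmqr_tsqrt (m + 3) 1 (m + 3) 2 2 (by omega) (Or.inl rfl)
      | succ n' =>
          have h2 : (n' + 1 + 2 : ℕ) - 2 = n' + 1 := rfl
          rw [h2] at hx
          have h4 : (n' + 1 : ℕ) = n' + 1 := rfl
          rw [show (n' + 1 : ℕ) = n' + 1 from rfl, lastB] at hx
          simp only [some_or', Option.mem_def, Option.some_inj] at hx
          subst hx
          have h5 : (2 : ℕ) + n' = (n' + 1 + 2) - 1 := by omega
          rw [h5]
          exact TSPrec.tsmqr_tsqrt (m + 3) ((n' + 1 + 2) - 1) (m + 3) (n' + 1 + 2)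
            (n' + 1 + 2) (by omega) (Or.inl rfl)

lemma cpPath_sum {p q : ℕ} (hq : 1 < q) (hpq : q < p) :
    ((cpPath p q).map tsWeight).sum = 12 * p + 18 * q - 32 := by
  simp only [cpPath, List.map_cons, List.sum_cons, List.map_append, List.sum_append,
    sumA, sumB, List.map_nil, List.sum_nil]
  simp only [tsWeight]
  omega
/-- **Proposition 2, case `p > q > 1`.** The critical path length of the TS-FT
algorithm (FlatTree with TS kernels) on a `p × q` matrix with `p > q > 1` is
`12p + 18q - 32`. -/
theorem tsft_cpLength_rect (p q : ℕ) (hq : 1 < q) (hpq : q < p) :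
    tsCpLength p q (flatTreeList p q) = 12 * p + 18 * q - 32 := by
  have hmem : (12 * p + 18 * q - 32) ∈
      { w : ℕ | ∃ path : List TSTask, TSIsPath p q (flatTreeList p q) path ∧
          w = (path.map tsWeight).sum } :=
    ⟨cpPath p q, ⟨cpPath_mem hq hpq, cpPath_chain hq hpq⟩, (cpPath_sum hq hpq).symm⟩
  have hub : ∀ w ∈ { w : ℕ | ∃ path : List TSTask, TSIsPath p q (flatTreeList p q) path ∧
      w = (path.map tsWeight).sum }, w ≤ 12 * p + 18 * q - 32 := by
    rintro w ⟨path, hpath, rfl⟩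
    exact path_sum_le hq hpq path hpath
  exact le_antisymm (csSup_le ⟨_, hmem⟩ hub) (le_csSup ⟨_, hub⟩ hmem)

end TiledQR
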